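/- Let o = (0,0), let p, q ∈ ℝ², and set r = p − q. Then [o,p] + [o,q] + [o,r] = conv{o,p,q} + conv{o,p,r}, where + denotes Minkowski sum. -/
import Mathlib


open Pointwise

private lemma mem_seg0 {p x : ℝ × ℝ} :
    x ∈ segment ℝ ((0, 0) : ℝ × ℝ) p ↔ ∃ t : ℝ, 0 ≤ t ∧ t ≤ 1 ∧ x = t • p := by
  constructor
  · rintro ⟨a, b, ha, hb, hab, rfl⟩
    exact ⟨b, hb, by linarith, by simp [Prod.ext_iff]⟩
  · rintro ⟨t, ht0, ht1, rfl⟩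
    exact ⟨1 - t, t, by linarith, ht0, by ring, by simp [Prod.ext_iff]⟩

private lemma mem_tri0 {p q x : ℝ × ℝ} :
    x ∈ convexHull ℝ ({((0, 0) : ℝ × ℝ), p, q} : Set (ℝ × ℝ)) ↔
      ∃ a b : ℝ, 0 ≤ a ∧ 0 ≤ b ∧ a + b ≤ 1 ∧ x = a • p + b • q := by
  rw [convexHull_insert ⟨p, Or.inl rfl⟩, convexHull_pair]
  simp only [mem_convexJoin, Set.mem_singleton_iff]
  constructor
  · rintro ⟨w, rfl, z, ⟨a, b, ha, hb, hab, rfl⟩, hx⟩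
    rw [mem_seg0] at hx
    obtain ⟨t, ht0, ht1, rfl⟩ := hx
    refine ⟨t * a, t * b, by positivity, by positivity, by nlinarith, ?_⟩
    simp [smul_add, smul_smul]
  · rintro ⟨a, b, ha, hb, hab, rfl⟩
    by_cases h : a + b = 0
    · have ha0 : a = 0 := by linarith
      have hb0 : b = 0 := by linarith
      refine ⟨(0, 0), rfl, p, left_mem_segment ℝ p q, ?_⟩
      rw [mem_seg0]
      exact ⟨0, le_refl 0, by norm_num, by simp [ha0, hb0]⟩
    · have hpos : 0 < a + b := lt_of_le_of_ne (by linarith) (Ne.symm h)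
      refine ⟨(0, 0), rfl, (a / (a + b)) • p + (b / (a + b)) • q,
        ⟨a / (a + b), b / (a + b), by positivity, by positivity, by field_simp, rfl⟩, ?_⟩
      rw [mem_seg0]
      refine ⟨a + b, le_of_lt hpos, hab, ?_⟩
      rw [smul_add, smul_smul, smul_smul]
      congr 1 <;> congr 1 <;> field_simp

/-- For `o = (0,0)`, `p, q ∈ ℝ²` and `r = p − q`,
`[o,p] + [o,q] + [o,r] = conv{o,p,q} + conv{o,p,r}`. -/
theorem segments_sum_eq_triangles_sum (p q r : ℝ × ℝ) (hr : r = p - q) :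
    segment ℝ ((0, 0) : ℝ × ℝ) p + segment ℝ ((0, 0) : ℝ × ℝ) q +
        segment ℝ ((0, 0) : ℝ × ℝ) r =
      convexHull ℝ ({((0, 0) : ℝ × ℝ), p, q} : Set (ℝ × ℝ)) +
        convexHull ℝ ({((0, 0) : ℝ × ℝ), p, r} : Set (ℝ × ℝ)) := by
  subst hr
  ext x
  simp only [Set.mem_add]
  constructor
  · rintro ⟨y, ⟨xs, hxs, xt, hxt, rfl⟩, xu, hxu, rfl⟩
    rw [mem_seg0] at hxs hxt hxu
    obtain ⟨s, hs0, hs1, rfl⟩ := hxs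
    obtain ⟨t, ht0, ht1, rfl⟩ := hxt
    obtain ⟨u, hu0, hu1, rfl⟩ := hxu
    by_cases hsu : s + u ≤ 1
    · refine ⟨t • q, mem_tri0.mpr ⟨0, t, le_refl 0, ht0, by linarith, by simp⟩,
        s • p + u • (p - q), mem_tri0.mpr ⟨s, u, hs0, hu0, hsu, rfl⟩, by module⟩
    · push_neg at hsu
      by_cases htu : u ≤ t
      · refine ⟨(s + u - 1) • p + (t - u) • q,
          mem_tri0.mpr ⟨s + u - 1, t - u, by linarith, by linarith, by linarith, rfl⟩,
          (1 : ℝ) • p + (0 : ℝ) • (p - q),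
          mem_tri0.mpr ⟨1, 0, by norm_num, le_refl 0, by norm_num, rfl⟩, by module⟩
      · push_neg at htu
        refine ⟨(s + u - 1) • p + (0 : ℝ) • q,
          mem_tri0.mpr ⟨s + u - 1, 0, by linarith, le_refl 0, by linarith, rfl⟩,
          (1 - (u - t)) • p + (u - t) • (p - q),
          mem_tri0.mpr ⟨1 - (u - t), u - t, by linarith, by linarith, by linarith, rfl⟩,
          by module⟩
  · rintro ⟨y, hy, z, hz, rfl⟩
    rw [mem_tri0] at hy hz
    obtain ⟨a, b, ha, hb, hab, rfl⟩ := hy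
    obtain ⟨c, d, hc, hd, hcd, rfl⟩ := hz
    by_cases hac : a + c ≤ 1
    · refine ⟨(a + c) • p + b • q,
        ⟨(a + c) • p, mem_seg0.mpr ⟨a + c, by linarith, hac, rfl⟩,
         b • q, mem_seg0.mpr ⟨b, hb, by linarith, rfl⟩, rfl⟩,
        d • (p - q), mem_seg0.mpr ⟨d, hd, by linarith, rfl⟩, by module⟩
    · push_neg at hac
      refine ⟨(1 : ℝ) • p + (b + a + c - 1) • q,
        ⟨(1 : ℝ) • p, mem_seg0.mpr ⟨1, by norm_num, le_refl 1, rfl⟩,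
         (b + a + c - 1) • q, mem_seg0.mpr ⟨b + a + c - 1, by linarith, by linarith, rfl⟩, rfl⟩,
        (d + a + c - 1) • (p - q),
        mem_seg0.mpr ⟨d + a + c - 1, by linarith, by linarith, rfl⟩, by module⟩
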